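/- Let A be a unital commutative C*-algebra and δ : A → A a star-algebra endomorphism. Then the image of the map α dual to δ (defined on the clopen set Δ = {x ∈ M(A) : x(δ(1)) ≠ 0} of the maximal ideal space by α = δ*|_Δ) is an open subset of M(A) if and only if the kernel of δ is a unital ideal (i.e., ker δ has a multiplicative unit). -/
import Mathlib


open Classical

/-- For a unital commutative C*-algebra `A = C(M, ℂ)` (M compact Hausdorff) and an
endomorphism `δ` given by a clopen set `Δ ⊆ M` and a continuous map `α : Δ → M` via
`δ(a)(x) = a(α x)` for `x ∈ Δ` and `0` otherwise, the image of `α` is open iff `ker δ` is a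
unital ideal. -/
theorem stmt0 {M : Type*} [TopologicalSpace M] [CompactSpace M] [T2Space M]
    (Δ : Set M) (hΔ : IsClopen Δ) (α : C(Δ, M))
    (δ : C(M, ℂ) → C(M, ℂ))
    (hδ : ∀ (a : C(M, ℂ)) (x : M), δ a x = if h : x ∈ Δ then a (α ⟨x, h⟩) else 0) :
    IsOpen (Set.range (fun x : Δ => α x)) ↔
      ∃ e : C(M, ℂ), δ e = 0 ∧ ∀ a : C(M, ℂ), δ a = 0 → e * a = a := by
  set K : Set M := Set.range (fun x : Δ => α x) with hK
  have hΔcomp : CompactSpace Δ := isCompact_iff_compactSpace.mp hΔ.isClosed.isCompact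
  have hKcomp : IsCompact K := isCompact_range α.continuous
  have hKclosed : IsClosed K := hKcomp.isClosed
  constructor
  · intro hKopen
    -- e = indicator of Kᶜ
    have hclopen : IsClopen Kᶜ := ⟨hKopen.isClosed_compl, hKclosed.isOpen_compl⟩
    refine ⟨⟨fun x => if x ∈ K then 0 else 1, ?_⟩, ?_, ?_⟩
    · refine continuous_if ?_ continuousOn_const continuousOn_const
      intro x hx
      have hf : frontier K = ∅ := (IsClopen.frontier_eq ⟨hKclosed, hKopen⟩)
      have : frontier {x | x ∈ K} = frontier K := rfl
      rw [this, hf] at hx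
      exact absurd hx (Set.notMem_empty x)
    · ext x
      rw [hδ]
      split
      · next h =>
        have : (α ⟨x, h⟩) ∈ K := ⟨⟨x, h⟩, rfl⟩
        simp [this]
      · rfl
    · intro a ha
      ext x
      by_cases hx : x ∈ K
      · obtain ⟨y, hy⟩ := hx
        have h0 : a x = 0 := by
          have := hδ a (y : M)
          rw [ha] at this
          simp only [ContinuousMap.zero_apply] at this
          rw [dif_pos y.2] at this
          rw [← hy]
          simpa using this.symm
        simp [h0]
      · simp [ContinuousMap.mul_apply, ContinuousMap.coe_mk, if_neg hx]
  · rintro ⟨e, he0, he⟩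
    -- e vanishes on K
    have heK : ∀ x ∈ K, e x = 0 := by
      rintro x ⟨y, rfl⟩
      have := hδ e (y : M)
      rw [he0] at this
      simp only [ContinuousMap.zero_apply] at this
      rw [dif_pos y.2] at this
      simpa using this.symm
    -- x ∉ K → e x = 1
    have he1 : ∀ x, x ∉ K → e x = 1 := by
      intro x hx
      obtain ⟨f, hf0, hf1, -⟩ := exists_continuous_zero_one_of_isClosed hKclosed
        (isClosed_singleton (x := x)) (by simpa [Set.disjoint_singleton_right] using hx)
      set a : C(M, ℂ) := (⟨Complex.ofReal, Complex.continuous_ofReal⟩ : C(ℝ, ℂ)).comp f with ha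
      have hδa : δ a = 0 := by
        ext z
        rw [hδ]
        split
        · next h =>
          have : f (α ⟨z, h⟩) = 0 := hf0 ⟨⟨z, h⟩, rfl⟩
          simp [ha, this]
        · rfl
      have := congrArg (fun g : C(M, ℂ) => g x) (he a hδa)
      simp only [ContinuousMap.mul_apply] at this
      have hax : a x = 1 := by
        have : f x = 1 := hf1 rfl
        simp [ha, this]
      rw [hax, mul_one] at this
      exact this
    have : K = (e ⁻¹' {1})ᶜ := by
      ext x
      simp only [Set.mem_compl_iff, Set.mem_preimage, Set.mem_singleton_iff]
      constructor
      · intro hx h1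
        rw [heK x hx] at h1
        exact zero_ne_one h1
      · intro h
        by_contra hx
        exact h (he1 x hx)
    rw [this]
    exact (isClosed_singleton.preimage e.continuous).isOpen_compl
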